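/- Let R be a nonzero commutative ring with a subset S and a family T satisfying (N1), (N2), (N3), and suppose |S| ≥ 2. Then the sum of all elements of S equals 1. -/
import Mathlib


/-- Under (N1), (N2), (N3), with `S` finite of size at least two,
the sum of all elements of `S` equals `1`. -/
theorem stmt_3 {R : Type*} [CommRing R] [Nontrivial R] (S : Finset R) (T : Set R)
    (hS : 2 ≤ S.card)
    (hN1 : ∀ x : R, ∃! F : Finset R, F ⊆ S ∧ ∑ a ∈ F, a = x)
    (hN2 : ∀ t ∈ T, ∀ s ∈ S, t * s = 0 ∨ t * s = s)
    (hN3 : ∀ s ∈ S, ∀ s' ∈ S, s ≠ s' →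
      ∃ t ∈ T, (t * s = 0 ∧ t * s' ≠ 0) ∨ (t * s ≠ 0 ∧ t * s' = 0)) :
    ∑ s ∈ S, s = 1 := by
  -- distinct elements of S are orthogonal
  have orth : ∀ s ∈ S, ∀ a ∈ S, s ≠ a → s * a = 0 := by
    intro s hs a ha hne
    obtain ⟨t, htT, h⟩ := hN3 s hs a ha hne
    rcases h with ⟨h1, h2⟩ | ⟨h1, h2⟩
    · have : t * a = a := (hN2 t htT a ha).resolve_left h2
      calc s * a = s * (t * a) := by rw [this]
        _ = (t * s) * a := by ring
        _ = 0 := by rw [h1, zero_mul]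
    · have : t * s = s := (hN2 t htT s hs).resolve_left h1
      calc s * a = (t * s) * a := by rw [this]
        _ = s * (t * a) := by ring
        _ = 0 := by rw [h2, mul_zero]
  -- elements of S are nonzero
  have hne0 : ∀ s ∈ S, s ≠ 0 := by
    intro s hs h0
    obtain ⟨G, _, hG⟩ := hN1 (0 : R)
    have h1 : ({s} : Finset R) = (∅ : Finset R) := by
      have e1 := hG {s} ⟨Finset.singleton_subset_iff.mpr hs, by simp [h0]⟩
      have e2 := hG ∅ ⟨Finset.empty_subset S, by simp⟩
      rw [e1, e2]
    simpa using h1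
  obtain ⟨F, ⟨hFS, hFsum⟩, _⟩ := hN1 (1 : R)
  have hSF : S ⊆ F := by
    intro s hs
    by_contra hsF
    have : s = 0 := by
      calc s = s * 1 := (mul_one s).symm
        _ = ∑ a ∈ F, s * a := by rw [← hFsum, Finset.mul_sum]
        _ = 0 := Finset.sum_eq_zero fun a haF =>
            orth s hs a (hFS haF) (fun h => hsF (h ▸ haF))
    exact hne0 s hs this
  have : F = S := Finset.Subset.antisymm hFS hSF
  rw [← this, hFsum]
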